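/- arXiv:2306.02226 — 4 statements merged into one kernel-verified Lean document; each statement's English description precedes it below -/
import Mathlib

section
/- For all a, b > 0, the function ξ ↦ α*₁(a,b,ξ) is twice differentiable on ℝ, and its second derivative at ξ equals a·g((a/b)·e^{-2ξ}) + b·g((b/a)·e^{2ξ}). -/
open Real

/-- The logarithmic mean `Λ(s,t)`. -/
noncomputable def logMean (s t : ℝ) : ℝ :=
  if s = t then s else (s - t) / (Real.log s - Real.log t)

/-- The harmonic-logarithmic mean `Λ_H(s,t) = st/Λ(s,t)`. -/
noncomputable def harmLogMean (s t : ℝ) : ℝ := s * t / logMean s t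

/-- `α*₁(a,b,ξ) = ∫₀^ξ sinh(x) Λ_H(a e^{-x}, b e^{x}) dx`. -/
noncomputable def alphaOne (a b ξ : ℝ) : ℝ :=
  ∫ x in (0:ℝ)..ξ, Real.sinh x * harmLogMean (a * Real.exp (-x)) (b * Real.exp x)

/-- `g(x) = (x log x - x + 1)/(x-1)²` for `x ≠ 1`, with `g(1) = 1/2`. -/
noncomputable def gFun (x : ℝ) : ℝ :=
  if x = 1 then 1 / 2 else (x * Real.log x - x + 1) / (x - 1) ^ 2

/-- Auxiliary smooth function `L(w) = w/(e^w - 1)`, `L(0) = 1`. -/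
noncomputable def Lfun (w : ℝ) : ℝ := if w = 0 then 1 else w / (Real.exp w - 1)

/-- Derivative of `Lfun`. -/
noncomputable def Lfun' (w : ℝ) : ℝ :=
  if w = 0 then -(1/2) else (Real.exp w - 1 - w * Real.exp w) / (Real.exp w - 1) ^ 2

lemma exp_sub_one_ne {w : ℝ} (hw : w ≠ 0) : Real.exp w - 1 ≠ 0 := by
  intro h
  exact hw ((Real.exp_eq_one_iff w).mp (by linarith))

lemma hasDerivAt_Lfun (w : ℝ) : HasDerivAt Lfun (Lfun' w) w := by
  rcases eq_or_ne w 0 with rfl | hw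
  · -- the hard case: at 0
    have h1 : Filter.Tendsto (fun x : ℝ => (Real.exp x - 1) / x)
        (nhdsWithin 0 {(0:ℝ)}ᶜ) (nhds 1) := by
      have h := Real.hasDerivAt_exp 0
      rw [hasDerivAt_iff_tendsto_slope, Real.exp_zero] at h
      exact h.congr fun x => by rw [slope_def_field, Real.exp_zero, sub_zero]
    have h1' : Filter.Tendsto (fun x : ℝ => x / (Real.exp x - 1))
        (nhdsWithin 0 {(0:ℝ)}ᶜ) (nhds 1) := by
      have := h1.inv₀ one_ne_zero
      simpa [inv_div] using this
    have h2 : Filter.Tendsto (fun x : ℝ => (Real.exp x - 1 - x) / x ^ 2)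
        (nhdsWithin 0 {(0:ℝ)}ᶜ) (nhds (1/2)) := by
      have hsq : Filter.Tendsto (fun x : ℝ => (Real.exp x - 1 - x) / x ^ 2 - 1/2)
          (nhdsWithin 0 {(0:ℝ)}ᶜ) (nhds 0) := by
        apply squeeze_zero_norm' (a := fun x : ℝ => (2/9) * |x|)
        · have hmem : ∀ᶠ x : ℝ in nhdsWithin 0 {(0:ℝ)}ᶜ, |x| ≤ 1 ∧ x ≠ 0 := by
            filter_upwards [Filter.inter_mem
              (nhdsWithin_le_nhds (Metric.closedBall_mem_nhds (0:ℝ) one_pos))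
              self_mem_nhdsWithin] with x hx
            exact ⟨by simpa [Real.dist_eq] using hx.1, hx.2⟩
          filter_upwards [hmem] with x hx
          obtain ⟨hx1, hx0⟩ := hx
          have hb := Real.exp_bound hx1 (n := 3) (by norm_num)
          have hsum : (∑ m ∈ Finset.range 3, x ^ m / (m.factorial : ℝ))
              = 1 + x + x ^ 2 / 2 := by
            simp [Finset.sum_range_succ, Nat.factorial]
          rw [hsum] at hb
          have heq : (Real.exp x - 1 - x) / x ^ 2 - 1/2
              = (Real.exp x - (1 + x + x ^ 2 / 2)) / x ^ 2 := by
            field_simp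
            ring
          rw [heq]
          rw [norm_div, Real.norm_eq_abs, Real.norm_eq_abs, abs_of_nonneg (sq_nonneg x)]
          rw [div_le_iff₀ (by positivity : (0:ℝ) < x ^ 2)]
          calc |Real.exp x - (1 + x + x ^ 2 / 2)|
              ≤ |x| ^ 3 * (((3:ℕ).succ : ℝ) / (((3:ℕ).factorial : ℝ) * 3)) := hb
            _ = 2/9 * |x| * x ^ 2 := by
                rw [show |x| ^ 3 = |x| * |x| ^ 2 by ring, sq_abs]
                norm_num [Nat.factorial]
                ring
        · have h0 : Filter.Tendsto (fun x : ℝ => (2/9) * |x|) (nhds 0)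
              (nhds ((2/9) * |(0:ℝ)|)) := (continuous_const.mul continuous_abs).tendsto 0
          simpa using h0.mono_left nhdsWithin_le_nhds
      have := hsq.add_const (1/2 : ℝ)
      simpa using this
    rw [hasDerivAt_iff_tendsto_slope]
    have hcomb := (h2.mul h1').neg
    have hval : Lfun' 0 = -(1/2 * 1) := by simp [Lfun']
    rw [hval]
    apply hcomb.congr'
    filter_upwards [self_mem_nhdsWithin] with x hx
    have hx0 : x ≠ 0 := hx
    have hex : Real.exp x - 1 ≠ 0 := exp_sub_one_ne hx0
    have hL : Lfun x = x / (Real.exp x - 1) := by simp [Lfun, hx0]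
    have hL0 : Lfun 0 = 1 := by simp [Lfun]
    rw [slope_def_field, hL, hL0]
    field_simp
    ring
  · -- away from 0
    have h : HasDerivAt (fun x : ℝ => x / (Real.exp x - 1))
        ((1 * (Real.exp w - 1) - w * Real.exp w) / (Real.exp w - 1) ^ 2) w :=
      (hasDerivAt_id w).div ((Real.hasDerivAt_exp w).sub_const 1) (exp_sub_one_ne hw)
    have heq : Lfun =ᶠ[nhds w] fun x : ℝ => x / (Real.exp x - 1) := by
      filter_upwards [isOpen_compl_singleton.mem_nhds hw] with x hx
      simp [Lfun, (by simpa using hx : x ≠ 0)]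
    have h' := h.congr_of_eventuallyEq heq
    have hv : Lfun' w = (1 * (Real.exp w - 1) - w * Real.exp w) / (Real.exp w - 1) ^ 2 := by
      rw [Lfun', if_neg hw]; ring_nf
    rw [hv]
    exact h'

lemma continuous_Lfun : Continuous Lfun := by
  rw [continuous_iff_continuousAt]
  exact fun w => (hasDerivAt_Lfun w).continuousAt

lemma sinh_mul_exp (a x : ℝ) :
    Real.sinh x * (a * Real.exp (-x)) = a / 2 * (1 - Real.exp (-2 * x)) := by
  rw [Real.sinh_eq]
  have h2 : Real.exp (-2 * x) = Real.exp (-x) * Real.exp (-x) := by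
    rw [← Real.exp_add]; ring_nf
  rw [h2, Real.exp_neg]
  have := Real.exp_ne_zero x
  field_simp

lemma alg_aux (S T W X : ℝ) (hT : T ≠ 0) (hST : S - T ≠ 0) (hW : W ≠ 0) :
    X * (S * T / ((S - T) / W)) = X * S * (W / (S / T - 1)) := by
  have h1 : S / T - 1 = (S - T) / T := by field_simp
  rw [h1]
  field_simp

lemma integrand_eq (a b : ℝ) (ha : 0 < a) (hb : 0 < b) (x : ℝ) :
    Real.sinh x * harmLogMean (a * Real.exp (-x)) (b * Real.exp x)
      = a / 2 * (1 - Real.exp (-2 * x)) * Lfun (Real.log (a / b) - 2 * x) := by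
  have hs : 0 < a * Real.exp (-x) := by positivity
  have ht : 0 < b * Real.exp x := by positivity
  have hlog : Real.log (a * Real.exp (-x)) - Real.log (b * Real.exp x)
      = Real.log (a / b) - 2 * x := by
    rw [Real.log_mul ha.ne' (Real.exp_ne_zero _), Real.log_mul hb.ne' (Real.exp_ne_zero _),
      Real.log_exp, Real.log_exp, Real.log_div ha.ne' hb.ne']
    ring
  by_cases hst : a * Real.exp (-x) = b * Real.exp x
  · have hw : Real.log (a / b) - 2 * x = 0 := by
      rw [← hlog, hst, sub_self]
    rw [harmLogMean, logMean, if_pos hst, hw]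
    have hL : Lfun 0 = 1 := by simp [Lfun]
    rw [hL, mul_one]
    have hcancel : a * Real.exp (-x) * (b * Real.exp x) / (a * Real.exp (-x))
        = b * Real.exp x := by
      rw [mul_comm, mul_div_assoc, div_self hs.ne', mul_one]
    rw [hcancel, ← hst]
    exact sinh_mul_exp a x
  · have hw : Real.log (a / b) - 2 * x ≠ 0 := by
      intro h
      apply hst
      have hle : Real.log (a * Real.exp (-x)) = Real.log (b * Real.exp x) := by
        rw [h] at hlog; linarith
      calc a * Real.exp (-x) = Real.exp (Real.log (a * Real.exp (-x))) := (Real.exp_log hs).symm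
        _ = Real.exp (Real.log (b * Real.exp x)) := by rw [hle]
        _ = b * Real.exp x := Real.exp_log ht
    rw [harmLogMean, logMean, if_neg hst, hlog]
    rw [Lfun, if_neg hw]
    have hew : Real.exp (Real.log (a / b) - 2 * x)
        = (a * Real.exp (-x)) / (b * Real.exp x) := by
      rw [Real.exp_sub, Real.exp_log (div_pos ha hb)]
      rw [show (2:ℝ) * x = x + x by ring, Real.exp_add, Real.exp_neg]
      field_simp
    rw [← sinh_mul_exp a x, hew]
    have hdivne : (a * Real.exp (-x)) / (b * Real.exp x) - 1
        = ((a * Real.exp (-x)) / (b * Real.exp x)) - 1 := rfl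
    exact alg_aux _ _ _ _ ht.ne' (sub_ne_zero.mpr hst) hw

lemma key_identity (a b ξ : ℝ) (ha : 0 < a) (hb : 0 < b) :
    a * Real.exp (-2 * ξ) * Lfun (Real.log (a / b) - 2 * ξ)
      - a * (1 - Real.exp (-2 * ξ)) * Lfun' (Real.log (a / b) - 2 * ξ)
    = a * gFun (a / b * Real.exp (-2 * ξ)) + b * gFun (b / a * Real.exp (2 * ξ)) := by
  set w := Real.log (a / b) - 2 * ξ with hwdef
  clear_value w
  have hu : Real.exp w = a / b * Real.exp (-2 * ξ) := by
    rw [hwdef, Real.exp_sub, Real.exp_log (div_pos ha hb),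
      show (-2 : ℝ) * ξ = -(2 * ξ) by ring, Real.exp_neg]
    ring
  have hv : Real.exp (-w) = b / a * Real.exp (2 * ξ) := by
    rw [Real.exp_neg, hu, mul_inv, inv_div,
      show (-2 : ℝ) * ξ = -(2 * ξ) by ring, Real.exp_neg, inv_inv]
  have hE2 : Real.exp (-2 * ξ) = b / a * Real.exp w := by
    rw [hu]; field_simp
  by_cases h0 : w = 0
  · have hu1 : a / b * Real.exp (-2 * ξ) = 1 := by rw [← hu, h0, Real.exp_zero]
    have hv1 : b / a * Real.exp (2 * ξ) = 1 := by rw [← hv, h0, neg_zero, Real.exp_zero]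
    have he : Real.exp (-2 * ξ) = b / a := by
      rw [hE2, h0, Real.exp_zero, mul_one]
    rw [hu1, hv1, h0, he]
    simp only [Lfun, Lfun', gFun, if_pos rfl, ↓reduceIte]
    field_simp
    ring
  · have hu1 : a / b * Real.exp (-2 * ξ) ≠ 1 := by
      rw [← hu]
      exact fun h => h0 ((Real.exp_eq_one_iff w).mp h)
    have hv1 : b / a * Real.exp (2 * ξ) ≠ 1 := by
      rw [← hv]
      exact fun h => h0 (by simpa using (Real.exp_eq_one_iff (-w)).mp h)
    have hlogu : Real.log (a / b * Real.exp (-2 * ξ)) = w := by rw [← hu, Real.log_exp]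
    have hlogv : Real.log (b / a * Real.exp (2 * ξ)) = -w := by rw [← hv, Real.log_exp]
    rw [Lfun, Lfun', gFun, gFun, if_neg h0, if_neg h0, if_neg hu1, if_neg hv1,
      hlogu, hlogv, ← hu, ← hv, hE2, Real.exp_neg]
    have hE1 : Real.exp w - 1 ≠ 0 := exp_sub_one_ne h0
    have hE0 : Real.exp w ≠ 0 := Real.exp_ne_zero w
    have hE1' : 1 - Real.exp w ≠ 0 := fun h => hE1 (by linarith)
    have hinv : (Real.exp w)⁻¹ - 1 = (1 - Real.exp w) / Real.exp w := by
      field_simp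
    rw [hinv, div_pow]
    field_simp
    ring

lemma hasDerivAt_F (a b ξ : ℝ) :
    HasDerivAt (fun x => a / 2 * (1 - Real.exp (-2 * x)) * Lfun (Real.log (a / b) - 2 * x))
      (a * Real.exp (-2 * ξ) * Lfun (Real.log (a / b) - 2 * ξ)
        - a * (1 - Real.exp (-2 * ξ)) * Lfun' (Real.log (a / b) - 2 * ξ)) ξ := by
  have hin1 : HasDerivAt (fun x : ℝ => -2 * x) (-2) ξ := by
    simpa using (hasDerivAt_id ξ).const_mul (-2 : ℝ)
  have he : HasDerivAt (fun x : ℝ => Real.exp (-2 * x)) (Real.exp (-2 * ξ) * (-2)) ξ :=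
    (Real.hasDerivAt_exp _).comp ξ hin1
  have h1 : HasDerivAt (fun x : ℝ => a / 2 * (1 - Real.exp (-2 * x)))
      (a / 2 * (0 - Real.exp (-2 * ξ) * (-2))) ξ :=
    ((hasDerivAt_const ξ (1:ℝ)).sub he).const_mul (a / 2)
  have hin2 : HasDerivAt (fun x : ℝ => Real.log (a / b) - 2 * x) (-2) ξ := by
    simpa using ((hasDerivAt_id ξ).const_mul (2:ℝ)).const_sub (Real.log (a / b))
  have h2 : HasDerivAt (fun x : ℝ => Lfun (Real.log (a / b) - 2 * x))
      (Lfun' (Real.log (a / b) - 2 * ξ) * (-2)) ξ :=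
    (hasDerivAt_Lfun _).comp ξ hin2
  have : HasDerivAt (fun x : ℝ => a / 2 * (1 - Real.exp (-2 * x)) * Lfun (Real.log (a / b) - 2 * x)) _ ξ :=
    h1.mul h2
  convert this using 1
  ring

/-- For `a, b > 0` the map `ξ ↦ α*₁(a,b,ξ)` is twice differentiable on `ℝ`, with
second derivative `a g((a/b)e^{-2ξ}) + b g((b/a)e^{2ξ})`. -/
theorem alphaOne_second_deriv (a b : ℝ) (ha : 0 < a) (hb : 0 < b) :
    ∃ f' : ℝ → ℝ,
      (∀ ξ : ℝ, HasDerivAt (fun ξ' => alphaOne a b ξ') (f' ξ) ξ) ∧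
      (∀ ξ : ℝ, HasDerivAt f'
        (a * gFun (a / b * Real.exp (-2 * ξ)) + b * gFun (b / a * Real.exp (2 * ξ))) ξ) := by
  refine ⟨fun ξ => a / 2 * (1 - Real.exp (-2 * ξ)) * Lfun (Real.log (a / b) - 2 * ξ), ?_, ?_⟩
  · intro ξ
    have hFc : Continuous
        (fun x : ℝ => a / 2 * (1 - Real.exp (-2 * x)) * Lfun (Real.log (a / b) - 2 * x)) := by
      apply Continuous.mul
      · exact continuous_const.mul (continuous_const.sub
          (Real.continuous_exp.comp (continuous_const.mul continuous_id)))
      · exact continuous_Lfun.comp (continuous_const.sub (continuous_const.mul continuous_id))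
    have heq : (fun ξ' => alphaOne a b ξ')
        = fun ξ' => ∫ x in (0:ℝ)..ξ',
            a / 2 * (1 - Real.exp (-2 * x)) * Lfun (Real.log (a / b) - 2 * x) := by
      funext ξ'
      simp only [alphaOne]
      apply intervalIntegral.integral_congr
      intro x _
      exact integrand_eq a b ha hb x
    rw [heq]
    exact intervalIntegral.integral_hasDerivAt_right (hFc.intervalIntegrable _ _)
      (hFc.stronglyMeasurableAtFilter _ _) hFc.continuousAt
  · intro ξ
    have h := hasDerivAt_F a b ξ
    rw [key_identity a b ξ ha hb] at h
    exact h
end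

section
/- For all a, b > 0, ε > 0 and ξ ∈ ℝ one has α*_ε(a,b,ξ) ≤ ε²·√(ab)·(cosh(|ξ|/ε) - 1). -/
open Real

/-- `α*_ε(a,b,ξ) = ε ∫₀^ξ sinh(x/ε) Λ_H(a e^{-x/ε}, b e^{x/ε}) dx`. -/
noncomputable def alphaEps (ε a b ξ : ℝ) : ℝ :=
  ε * ∫ x in (0:ℝ)..ξ,
    Real.sinh (x / ε) * harmLogMean (a * Real.exp (-x / ε)) (b * Real.exp (x / ε))

lemma sinh_nonneg' {t : ℝ} (ht : 0 ≤ t) : 0 ≤ Real.sinh t := by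
  rw [← Real.sinh_zero]; exact Real.sinh_le_sinh.mpr ht

lemma sinh_nonpos' {t : ℝ} (ht : t ≤ 0) : Real.sinh t ≤ 0 := by
  rw [← Real.sinh_zero]; exact Real.sinh_le_sinh.mpr ht

lemma exp_key {p q : ℝ} (h : q < p) :
    Real.exp ((p + q) / 2) * (p - q) ≤ Real.exp p - Real.exp q := by
  set y := (p - q) / 2 with hy
  have hy0 : 0 < y := by rw [hy]; linarith
  have hs : y < Real.sinh y := Real.self_lt_sinh_iff.mpr hy0
  have hsinh : Real.sinh y = (Real.exp y - Real.exp (-y)) / 2 := Real.sinh_eq y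
  have h1 : Real.exp ((p + q) / 2) * Real.exp y = Real.exp p := by
    rw [← Real.exp_add, hy]; ring_nf
  have h2 : Real.exp ((p + q) / 2) * Real.exp (-y) = Real.exp q := by
    rw [← Real.exp_add, hy]; ring_nf
  have hpos : 0 < Real.exp ((p + q) / 2) := Real.exp_pos _
  nlinarith [hpos, hs, hsinh]

lemma sqrt_eq_exp' {s : ℝ} (hs : 0 < s) : Real.sqrt s = Real.exp (Real.log s / 2) := by
  rw [Real.sqrt_eq_rpow, Real.rpow_def_of_pos hs]
  congr 1; ring

lemma sqrt_le_logMean {s t : ℝ} (hs : 0 < s) (ht : 0 < t) :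
    Real.sqrt (s * t) ≤ logMean s t := by
  have key : ∀ u v : ℝ, 0 < u → 0 < v → v < u →
      Real.sqrt (u * v) ≤ (u - v) / (Real.log u - Real.log v) := by
    intro u v hu hv hvu
    have hlog : Real.log v < Real.log u := Real.log_lt_log hv hvu
    have h1 : Real.sqrt (u * v) = Real.exp ((Real.log u + Real.log v) / 2) := by
      rw [sqrt_eq_exp' (by positivity), Real.log_mul hu.ne' hv.ne']
    rw [h1, le_div_iff₀ (by linarith)]
    have := exp_key hlog
    rwa [Real.exp_log hu, Real.exp_log hv] at this
  unfold logMean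
  split_ifs with h
  · subst h; rw [Real.sqrt_mul_self hs.le]
  · rcases lt_or_gt_of_ne h with hlt | hlt
    · have := key t s ht hs hlt
      rw [mul_comm t s] at this
      calc Real.sqrt (s * t) ≤ (t - s) / (Real.log t - Real.log s) := this
        _ = (s - t) / (Real.log s - Real.log t) := by
            rw [← neg_div_neg_eq]; ring_nf
    · exact key s t hs ht hlt

lemma logMean_pos {s t : ℝ} (hs : 0 < s) (ht : 0 < t) : 0 < logMean s t := by
  unfold logMean
  split_ifs with h
  · exact hs
  · rcases lt_or_gt_of_ne h with hlt | hlt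
    · have hlog : Real.log s < Real.log t := Real.log_lt_log hs hlt
      have : (s - t) / (Real.log s - Real.log t) = (t - s) / (Real.log t - Real.log s) := by
        rw [← neg_div_neg_eq]; ring_nf
      rw [this]; exact div_pos (by linarith) (by linarith)
    · exact div_pos (by linarith) (by linarith [Real.log_lt_log ht hlt])

lemma harmLogMean_le_sqrt {s t : ℝ} (hs : 0 < s) (ht : 0 < t) :
    harmLogMean s t ≤ Real.sqrt (s * t) := by
  have hΛ := logMean_pos hs ht
  have hg := sqrt_le_logMean hs ht
  rw [harmLogMean, div_le_iff₀ hΛ]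
  calc s * t = Real.sqrt (s * t) * Real.sqrt (s * t) := (Real.mul_self_sqrt (by positivity)).symm
    _ ≤ Real.sqrt (s * t) * logMean s t :=
        mul_le_mul_of_nonneg_left hg (Real.sqrt_nonneg _)

lemma harmLogMean_pos {s t : ℝ} (hs : 0 < s) (ht : 0 < t) : 0 < harmLogMean s t :=
  div_pos (by positivity) (logMean_pos hs ht)

lemma sinh_integral (ε c d : ℝ) (hε : 0 < ε) :
    ∫ x in c..d, Real.sinh (x / ε) = ε * (Real.cosh (d / ε) - Real.cosh (c / ε)) := by
  have : ∀ x : ℝ, HasDerivAt (fun y => ε * Real.cosh (y / ε)) (Real.sinh (x / ε)) x := by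
    intro x
    have h1 : HasDerivAt (fun y : ℝ => y / ε) (1 / ε) x := (hasDerivAt_id x).div_const ε
    have h2 := (Real.hasDerivAt_cosh (x / ε)).comp x h1
    have h3 := h2.const_mul ε
    have e : ε * (Real.sinh (x / ε) * (1 / ε)) = Real.sinh (x / ε) := by
      rw [one_div, mul_comm (Real.sinh _), ← mul_assoc, mul_inv_cancel₀ hε.ne', one_mul]
    rw [e] at h3; exact h3
  rw [intervalIntegral.integral_eq_sub_of_hasDerivAt (fun x _ => this x)
    ((Continuous.intervalIntegrable (by continuity) c d))]
  ring

lemma prod_eq (a b ε x : ℝ) (hε : 0 < ε) :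
    a * Real.exp (-x / ε) * (b * Real.exp (x / ε)) = a * b := by
  have h : Real.exp (-x / ε) * Real.exp (x / ε) = 1 := by
    rw [← Real.exp_add, show -x / ε + x / ε = 0 by ring, Real.exp_zero]
  rw [show a * Real.exp (-x / ε) * (b * Real.exp (x / ε))
      = a * b * (Real.exp (-x / ε) * Real.exp (x / ε)) by ring, h, mul_one]

/-- `α*_ε(a,b,ξ) ≤ ε² √(ab) (cosh(|ξ|/ε) - 1)`. -/
theorem alphaEps_le_cosh_bound (ε a b ξ : ℝ) (hε : 0 < ε) (ha : 0 < a) (hb : 0 < b) :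
    alphaEps ε a b ξ ≤ ε ^ 2 * Real.sqrt (a * b) * (Real.cosh (|ξ| / ε) - 1) := by
  set f : ℝ → ℝ := fun x =>
    Real.sinh (x / ε) * harmLogMean (a * Real.exp (-x / ε)) (b * Real.exp (x / ε)) with hf
  set g : ℝ → ℝ := fun x => Real.sinh (x / ε) * Real.sqrt (a * b) with hg
  have hgc : Continuous g := by continuity
  have hbound : ∀ x : ℝ,
      harmLogMean (a * Real.exp (-x / ε)) (b * Real.exp (x / ε)) ≤ Real.sqrt (a * b) := by
    intro x
    have := harmLogMean_le_sqrt (s := a * Real.exp (-x / ε)) (t := b * Real.exp (x / ε))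
      (by positivity) (by positivity)
    rwa [prod_eq a b ε x hε] at this
  have hΛpos : ∀ x : ℝ,
      0 < harmLogMean (a * Real.exp (-x / ε)) (b * Real.exp (x / ε)) := fun x =>
    harmLogMean_pos (by positivity) (by positivity)
  rcases le_or_gt 0 ξ with hξ | hξ
  · -- nonnegative case
    rw [abs_of_nonneg hξ]
    have hmono : ∫ x in Set.Ioc 0 ξ, f x ≤ ∫ x in Set.Ioc 0 ξ, g x := by
      apply MeasureTheory.integral_mono_of_nonneg
      · filter_upwards [MeasureTheory.ae_restrict_mem measurableSet_Ioc] with x hx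
        exact mul_nonneg (sinh_nonneg' (div_nonneg hx.1.le hε.le)) (hΛpos x).le
      · exact hgc.integrableOn_Ioc
      · filter_upwards [MeasureTheory.ae_restrict_mem measurableSet_Ioc] with x hx
        exact mul_le_mul_of_nonneg_left (hbound x) (sinh_nonneg' (div_nonneg hx.1.le hε.le))
    have hgval : ∫ x in (0:ℝ)..ξ, g x = Real.sqrt (a * b) * (ε * (Real.cosh (ξ / ε) - 1)) := by
      simp only [hg]
      rw [intervalIntegral.integral_mul_const, sinh_integral ε 0 ξ hε]
      simp [Real.cosh_zero]; ring
    have key : ∫ x in (0:ℝ)..ξ, f x ≤ Real.sqrt (a * b) * (ε * (Real.cosh (ξ / ε) - 1)) := by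
      rw [intervalIntegral.integral_of_le hξ, ← hgval, intervalIntegral.integral_of_le hξ]
      exact hmono
    calc alphaEps ε a b ξ = ε * ∫ x in (0:ℝ)..ξ, f x := rfl
      _ ≤ ε * (Real.sqrt (a * b) * (ε * (Real.cosh (ξ / ε) - 1))) :=
          mul_le_mul_of_nonneg_left key hε.le
      _ = ε ^ 2 * Real.sqrt (a * b) * (Real.cosh (ξ / ε) - 1) := by ring
  · -- negative case
    rw [abs_of_neg hξ]
    have hsinh_np : ∀ x ∈ Set.Ioc ξ 0, Real.sinh (x / ε) ≤ 0 := fun x hx =>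
      sinh_nonpos' (div_nonpos_of_nonpos_of_nonneg hx.2 hε.le)
    have hmono : ∫ x in Set.Ioc ξ 0, (-f) x ≤ ∫ x in Set.Ioc ξ 0, (-g) x := by
      apply MeasureTheory.integral_mono_of_nonneg
      · filter_upwards [MeasureTheory.ae_restrict_mem measurableSet_Ioc] with x hx
        simp only [Pi.neg_apply, hf, ← neg_mul]
        exact mul_nonneg (by linarith [hsinh_np x hx]) (hΛpos x).le
      · exact (hgc.neg).integrableOn_Ioc
      · filter_upwards [MeasureTheory.ae_restrict_mem measurableSet_Ioc] with x hx
        simp only [Pi.neg_apply, hf, hg, ← neg_mul]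
        exact mul_le_mul_of_nonneg_left (hbound x) (by linarith [hsinh_np x hx])
    have hgval : ∫ x in ξ..(0:ℝ), (-g) x
        = Real.sqrt (a * b) * (ε * (Real.cosh (ξ / ε) - 1)) := by
      simp only [hg, Pi.neg_apply]
      rw [intervalIntegral.integral_neg, intervalIntegral.integral_mul_const,
        sinh_integral ε ξ 0 hε]
      simp [Real.cosh_zero]; ring
    have key : ∫ x in ξ..(0:ℝ), (-f) x ≤ Real.sqrt (a * b) * (ε * (Real.cosh (ξ / ε) - 1)) := by
      rw [intervalIntegral.integral_of_le hξ.le, ← hgval,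
        intervalIntegral.integral_of_le hξ.le]
      exact hmono
    have heq : alphaEps ε a b ξ = ε * ∫ x in ξ..(0:ℝ), (-f) x := by
      rw [alphaEps, intervalIntegral.integral_symm ξ 0]
      simp only [Pi.neg_apply, intervalIntegral.integral_neg, hf]
    rw [heq]
    have hcosh : Real.cosh (-ξ / ε) = Real.cosh (ξ / ε) := by
      rw [neg_div, Real.cosh_neg]
    rw [hcosh]
    calc ε * ∫ x in ξ..(0:ℝ), (-f) x
        ≤ ε * (Real.sqrt (a * b) * (ε * (Real.cosh (ξ / ε) - 1))) :=
          mul_le_mul_of_nonneg_left key hε.le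
      _ = ε ^ 2 * Real.sqrt (a * b) * (Real.cosh (ξ / ε) - 1) := by ring
end

section
/- For all a, b > 0, ε > 0 and ξ ∈ ℝ, setting q := ε·log(a/b) - ξ, the Scharfetter–Gummel flux admits the kinetic-relation representation ε·(𝔟(q/ε)·a - 𝔟(-q/ε)·b) = 2ε·sinh(ξ/(2ε))·Λ_H(a·e^{-ξ/(2ε)}, b·e^{ξ/(2ε)}). -/
open Real

/-- The Bernoulli function `𝔟(s) = s/(e^s - 1)` for `s ≠ 0`, with `𝔟(0) = 1`. -/
noncomputable def bern (s : ℝ) : ℝ :=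
  if s = 0 then 1 else s / (Real.exp s - 1)

/-- Kinetic-relation representation of the Scharfetter–Gummel flux. -/
theorem SG_flux_kinetic_relation (ε a b ξ : ℝ) (hε : 0 < ε) (ha : 0 < a) (hb : 0 < b) :
    ε * (bern ((ε * Real.log (a / b) - ξ) / ε) * a -
          bern (-(ε * Real.log (a / b) - ξ) / ε) * b) =
      2 * ε * Real.sinh (ξ / (2 * ε)) *
        harmLogMean (a * Real.exp (-ξ / (2 * ε))) (b * Real.exp (ξ / (2 * ε))) := by
  have hε' : ε ≠ 0 := hε.ne'
  obtain ⟨t, rfl⟩ : ∃ t, ξ = 2 * ε * t := ⟨ξ / (2 * ε), by field_simp⟩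
  have ha' : a ≠ 0 := ha.ne'
  have hb' : b ≠ 0 := hb.ne'
  have harg : (ε * Real.log (a / b) - 2 * ε * t) / ε = Real.log (a / b) - 2 * t := by
    field_simp
  have hnegarg : -(ε * Real.log (a / b) - 2 * ε * t) / ε = -(Real.log (a / b) - 2 * t) := by
    field_simp
  have h2ε : (2 : ℝ) * ε ≠ 0 := by positivity
  have hpos : (2 * ε * t) / (2 * ε) = t := mul_div_cancel_left₀ t h2ε
  have hnegt : -(2 * ε * t) / (2 * ε) = -t := by rw [neg_div, hpos]
  rw [harg, hnegarg, hpos, hnegt]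
  set u := Real.log (a / b) - 2 * t with hu_def
  set T := Real.exp t with hT_def
  have hT : T ≠ 0 := (Real.exp_pos t).ne'
  have hE : Real.exp u = a / b * (T * T)⁻¹ := by
    rw [hu_def, Real.exp_sub, Real.exp_log (div_pos ha hb), two_mul, Real.exp_add]
    rfl
  by_cases hu : u = 0
  · -- degenerate case: a = b * T * T
    have hab : a = b * (T * T) := by
      have h1 : Real.exp u = 1 := by rw [hu, Real.exp_zero]
      rw [hE] at h1
      field_simp at h1
      linarith
    have hx : a * Real.exp (-t) = b * T := by
      rw [hab, Real.exp_neg, ← hT_def]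
      field_simp
    rw [hu, hx]
    simp only [bern, if_pos rfl, neg_zero, if_true]
    rw [harmLogMean, logMean, if_pos rfl]
    rw [Real.sinh_eq, Real.exp_neg, ← hT_def]
    have hbT : b * T ≠ 0 := mul_ne_zero hb' hT
    field_simp
    rw [hab]; ring
  · -- generic case
    have hE1 : Real.exp u - 1 ≠ 0 := by
      intro h
      exact hu (Real.exp_injective (by rw [Real.exp_zero]; linarith))
    have hE2 : Real.exp (-u) - 1 ≠ 0 := by
      intro h
      have : -u = 0 := Real.exp_injective (by rw [Real.exp_zero]; linarith)
      exact hu (by linarith)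
    have hab : a = Real.exp u * (b * (T * T)) := by
      rw [hE]; field_simp
    have hxy : a * Real.exp (-t) ≠ b * Real.exp t := by
      intro h
      rw [Real.exp_neg, ← hT_def, hab] at h
      apply hE1
      have h0 : (Real.exp u - 1) * (b * (T * T)) = 0 := by
        field_simp at h
        linear_combination (b * (T * T)) * h
      rcases mul_eq_zero.mp h0 with h' | h'
      · exact h'
      · exact absurd h' (mul_ne_zero hb' (mul_ne_zero hT hT))
    have hlog : Real.log (a * Real.exp (-t)) - Real.log (b * Real.exp t) = u := by
      rw [Real.log_mul ha' (Real.exp_ne_zero _), Real.log_mul hb' (Real.exp_ne_zero _),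
        Real.log_exp, Real.log_exp, hu_def, Real.log_div ha' hb']
      ring
    rw [bern, if_neg hu, bern, if_neg (neg_ne_zero.mpr hu)]
    rw [harmLogMean, logMean, if_neg hxy, hlog]
    rw [Real.sinh_eq, Real.exp_neg u, Real.exp_neg t, ← hT_def]
    clear_value u T
    clear hE hxy hlog hu_def hT_def harg hnegarg
    rw [hab]
    set E := Real.exp u with hE_def
    clear_value E
    have hEne : E ≠ 0 := by rw [hE_def]; exact Real.exp_ne_zero u
    have hE1' : (1 : ℝ) - E ≠ 0 := by intro h; apply hE1; linarith
    have hEinv : E⁻¹ - 1 ≠ 0 := by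
      intro h
      apply hE1
      have : E⁻¹ = 1 := by linarith
      have : E = 1 := by
        field_simp at this; linarith
      linarith
    have hdiff : E * (b * (T * T)) * T⁻¹ - b * T ≠ 0 := by
      have : E * (b * (T * T)) * T⁻¹ - b * T = (E - 1) * (b * T) := by
        field_simp
      rw [this]
      exact mul_ne_zero hE1 (mul_ne_zero hb' hT)
    have hden : E * b * T ^ 4 * 2 - b * T ^ 4 * 2 ≠ 0 := by
      have h4 : E * b * T ^ 4 * 2 - b * T ^ 4 * 2 = (E - 1) * (b * T ^ 4 * 2) := by ring
      rw [h4]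
      exact mul_ne_zero hE1 (mul_ne_zero (mul_ne_zero hb' (pow_ne_zero 4 hT)) two_ne_zero)
    field_simp
    have hden2 : T * 2 * (T * (E * (b * (T * T)) - T * (b * T))) ≠ 0 := by
      have h5 : E * (b * (T * T)) - T * (b * T) = (E - 1) * (b * (T * T)) := by ring
      rw [h5]
      exact mul_ne_zero (mul_ne_zero hT two_ne_zero)
        (mul_ne_zero hT (mul_ne_zero hE1 (mul_ne_zero hb' (mul_ne_zero hT hT))))
    ring
end

section
/- For all real a, b and every q ∈ ℝ, the Scharfetter–Gummel flux converges to the upwind flux in the vanishing-diffusion limit: lim_{ε → 0⁺} ε·(𝔟(-q/ε)·a - 𝔟(q/ε)·b) = q⁺·a - q⁻·b, where q⁺ = max{q, 0} and q⁻ = max{-q, 0}. -/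
open Real Filter

lemma aux_div_tendsto (c : ℝ) (hc : c ≠ 0) :
    Tendsto (fun ε : ℝ => c / (Real.exp (c / ε) - 1))
      (nhdsWithin 0 (Set.Ioi 0)) (nhds (max (-c) 0)) := by
  rcases lt_or_gt_of_ne hc with hneg | hpos
  · -- c < 0 : c/ε → -∞, exp → 0, limit = c / (0-1) = -c = max(-c) 0
    have h1 : Tendsto (fun ε : ℝ => c / ε) (nhdsWithin 0 (Set.Ioi 0)) atBot := by
      have := tendsto_inv_nhdsGT_zero.const_mul_atTop (neg_pos.mpr hneg)
      have h2 : Tendsto (fun ε : ℝ => -c / ε) (nhdsWithin 0 (Set.Ioi 0)) atTop := by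
        simpa [div_eq_mul_inv] using this
      exact (tendsto_neg_atTop_atBot.comp h2).congr (fun x => by simp [Function.comp, neg_div])
    have h2 : Tendsto (fun ε : ℝ => Real.exp (c / ε) - 1) (nhdsWithin 0 (Set.Ioi 0))
        (nhds (0 - 1)) := (Real.tendsto_exp_atBot.comp h1).sub_const 1
    have h3 := (tendsto_const_nhds (x := c)).div h2 (by norm_num)
    have : max (-c) 0 = c / (0 - 1) := by
      rw [max_eq_left (by linarith : (0:ℝ) ≤ -c)]; ring
    rw [this]
    exact h3
  · -- c > 0 : c/ε → +∞, exp - 1 → +∞, limit 0 = max (-c) 0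
    have h1 : Tendsto (fun ε : ℝ => c / ε) (nhdsWithin 0 (Set.Ioi 0)) atTop := by
      have := tendsto_inv_nhdsGT_zero.const_mul_atTop hpos
      simpa [div_eq_mul_inv] using this
    have h2 : Tendsto (fun ε : ℝ => Real.exp (c / ε) - 1) (nhdsWithin 0 (Set.Ioi 0))
        atTop := tendsto_atTop_add_const_right _ (-1) (Real.tendsto_exp_atTop.comp h1)
          |>.congr (fun x => by simp [Function.comp, sub_eq_add_neg])
    have : max (-c) 0 = 0 := max_eq_right (by linarith)
    rw [this]
    simpa [div_eq_mul_inv] using h2.inv_tendsto_atTop.const_mul c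
  
/-- In the vanishing-diffusion limit, the Scharfetter–Gummel flux converges to the
upwind flux: `ε(𝔟(-q/ε)a - 𝔟(q/ε)b) → q⁺ a - q⁻ b` as `ε → 0⁺`. -/
theorem SG_flux_tendsto_upwind (a b q : ℝ) :
    Tendsto (fun ε : ℝ => ε * (bern (-q / ε) * a - bern (q / ε) * b))
      (nhdsWithin 0 (Set.Ioi 0)) (nhds (max q 0 * a - max (-q) 0 * b)) := by
  rcases eq_or_ne q 0 with rfl | hq
  · simp only [neg_zero, zero_div, bern, if_pos rfl]
    have : Tendsto (fun ε : ℝ => ε * (1 * a - 1 * b)) (nhdsWithin 0 (Set.Ioi 0))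
        (nhds (0 * (1 * a - 1 * b))) :=
      (tendsto_id.mono_left nhdsWithin_le_nhds).mul_const _
    simpa using this
  · have hmain : Tendsto (fun ε : ℝ =>
        (-q) / (Real.exp (-q / ε) - 1) * a - q / (Real.exp (q / ε) - 1) * b)
        (nhdsWithin 0 (Set.Ioi 0)) (nhds (max q 0 * a - max (-q) 0 * b)) := by
      have ha := (aux_div_tendsto (-q) (neg_ne_zero.mpr hq)).mul_const a
      have hb := (aux_div_tendsto q hq).mul_const b
      rw [neg_neg] at ha
      exact ha.sub hb
    refine hmain.congr' ?_
    filter_upwards [self_mem_nhdsWithin] with ε (hε : 0 < ε)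
    have hε' : ε ≠ 0 := ne_of_gt hε
    have h1 : (-q) / ε ≠ 0 := by
      simp [div_eq_zero_iff, hq, hε']
    have h2 : q / ε ≠ 0 := by
      simp [div_eq_zero_iff, hq, hε']
    have hA : Real.exp (-q / ε) - 1 ≠ 0 := sub_ne_zero.mpr (fun h => h1 (Real.exp_eq_one_iff _ |>.mp h))
    have hB : Real.exp (q / ε) - 1 ≠ 0 := sub_ne_zero.mpr (fun h => h2 (Real.exp_eq_one_iff _ |>.mp h))
    simp only [bern, if_neg h1, if_neg h2]
    field_simp
end
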